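/- Let ℓ = 2. Then for every odd natural number n one has b(n) = a(n), and for every even natural number n ≥ 2 one has b(n) = a(n−1). -/
import Mathlib


open Filter Real

/-- `aa n m` = number of length-`n` paths on `ℤ≥0` with steps `±1` starting at `0`
and ending at `m`. -/
def aa : ℕ → ℕ → ℕ
  | 0, m => if m = 0 then 1 else 0
  | n+1, m => aa n (m+1) + (if m = 0 then 0 else aa n (m-1))

/-- `aSum n = Σ_{m=0}^n aa n m`. -/
def aSum (n : ℕ) : ℕ := ∑ m ∈ Finset.range (n+1), aa n m

/-- The modular variant `b(n,m)` depending on `ℓ`: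
`b(n,m) = a(n,m)` if `m ≡ ℓ-1 (mod ℓ)`; otherwise `b(0,m) = δ_{m,0}`, and for `n ≥ 1`,
`b(n,m) = b(n-1,m-1) + b(n-1,m+1)` if `m % ℓ < ℓ-2` (negative-index terms are `0`),
and `b(n,m) = b(n-1,m-1)` if `m ≡ ℓ-2 (mod ℓ)`. -/
def bb (ℓ : ℕ) : ℕ → ℕ → ℕ
  | 0, m => if m % ℓ = ℓ - 1 then aa 0 m else if m = 0 then 1 else 0
  | n+1, m =>
    if m % ℓ = ℓ - 1 then aa (n+1) m
    else if m % ℓ = ℓ - 2 then (if m = 0 then 0 else bb ℓ n (m-1))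
    else (if m = 0 then 0 else bb ℓ n (m-1)) + bb ℓ n (m+1)

/-- `bSum ℓ n = Σ_{m=0}^n bb ℓ n m`. -/
def bSum (ℓ : ℕ) (n : ℕ) : ℕ := ∑ m ∈ Finset.range (n+1), bb ℓ n m

/-- `cc ℓ n r = Σ_{m ≥ 0, m ≡ r (mod ℓ)} aa n m` (finite since `aa n m = 0` for `m > n`). -/
def cc (ℓ : ℕ) (n r : ℕ) : ℕ :=
  ∑ m ∈ Finset.range (n+1), if m % ℓ = r then aa n m else 0

/-- `ww ℓ n = Σ_{0 ≤ m ≤ n, m ≡ ℓ-1 (mod ℓ)} bb ℓ n m`. -/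
def ww (ℓ : ℕ) (n : ℕ) : ℕ :=
  ∑ m ∈ Finset.range (n+1), if m % ℓ = ℓ - 1 then bb ℓ n m else 0


lemma aa_parity : ∀ n m : ℕ, (n + m) % 2 = 1 → aa n m = 0 := by
  intro n
  induction n with
  | zero =>
    intro m h
    have : m ≠ 0 := by omega
    simp [aa, this]
  | succ n ih =>
    intro m h
    rw [aa]
    have h1 : aa n (m+1) = 0 := ih (m+1) (by omega)
    rcases Nat.eq_zero_or_pos m with hm | hm
    · subst hm; simpa using h1
    · have hm' : m ≠ 0 := by omega
      have h2 : aa n (m-1) = 0 := ih (m-1) (by omega)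
      simp [hm', h1, h2]

lemma bb2_odd (n m : ℕ) (h : m % 2 = 1) : bb 2 n m = aa n m := by
  cases n <;> simp [bb, h]

lemma bb2_even (n m : ℕ) (h : m % 2 = 0) :
    bb 2 (n+1) m = if m = 0 then 0 else aa n (m-1) := by
  rw [bb]
  have h1 : ¬ m % 2 = 1 := by omega
  simp only [h1, if_false, h, show (2:ℕ) - 2 = 0 from rfl, if_true]
  rcases Nat.eq_zero_or_pos m with hm | hm
  · simp [hm]
  · have hm' : m ≠ 0 := by omega
    simp [hm', bb2_odd n (m-1) (by omega)]

/-- For `ℓ = 2`: `b(n) = a(n)` for odd `n`, and `b(n) = a(n-1)` for even `n ≥ 2`. -/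
theorem stmt9 :
    (∀ n : ℕ, Odd n → bSum 2 n = aSum n) ∧
    (∀ n : ℕ, Even n → 2 ≤ n → bSum 2 n = aSum (n - 1)) := by
  constructor
  · intro n hn
    have hn1 : n % 2 = 1 := Nat.odd_iff.mp hn
    unfold bSum aSum
    apply Finset.sum_congr rfl
    intro m _
    rcases Nat.even_or_odd m with hm | hm
    · have hm2 : m % 2 = 0 := Nat.even_iff.mp hm
      obtain ⟨n', rfl⟩ := Nat.exists_eq_succ_of_ne_zero (show n ≠ 0 by omega)
      rw [bb2_even _ _ hm2]
      have ha : aa (n'+1) m = 0 := aa_parity _ _ (by omega)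
      rcases eq_or_ne m 0 with h0 | h0
      · subst h0; simpa using ha.symm
      · simp [h0, ha, aa_parity n' (m-1) (by omega)]
    · exact bb2_odd n m (Nat.odd_iff.mp hm)
  · intro n hn hn2
    have hn0 : n % 2 = 0 := Nat.even_iff.mp hn
    obtain ⟨n', rfl⟩ := Nat.exists_eq_succ_of_ne_zero (show n ≠ 0 by omega)
    have key : ∀ m, bb 2 (n'+1) m = if m = 0 then 0 else aa n' (m-1) := by
      intro m
      rcases Nat.even_or_odd m with hm | hm
      · exact bb2_even _ _ (Nat.even_iff.mp hm)
      · have hm1 : m % 2 = 1 := Nat.odd_iff.mp hm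
        rw [bb2_odd _ _ hm1, aa_parity _ _ (by omega)]
        have hm' : m ≠ 0 := by omega
        simp [hm', aa_parity n' (m-1) (by omega)]
    unfold bSum aSum
    simp only [key]
    rw [Finset.sum_range_succ']
    simp
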